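/- Let R₁ and R₂ be commutative rings and let I be a semiring ideal of R₁ × R₂ (i.e., 0 ∈ I, I is closed under addition, and closed under multiplication by arbitrary elements). If (R₁ × {0}) ∩ (({0} × R₂) + I) ⊆ I and ((R₁ × {0}) + I) ∩ ({0} × R₂) ⊆ I, then for every (a,b) ∈ I one has (a,0) ∈ I and (0,b) ∈ I; hence I is directly decomposable. -/
import Mathlib

open Pointwise

/-- An ideal in the semiring sense (not necessarily closed under negation). -/
def IsSemiringIdeal {S : Type*} [NonUnitalCommSemiring S] (I : Set S) : Prop :=
  (0 : S) ∈ I ∧ (∀ a b : S, a ∈ I → b ∈ I → a + b ∈ I) ∧ (∀ a s : S, a ∈ I → a * s ∈ I)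

theorem stmt_3 {R₁ R₂ : Type*} [CommRing R₁] [CommRing R₂]
    (I : Set (R₁ × R₂)) (hI : IsSemiringIdeal I)
    (h₁ : ((Set.univ : Set R₁) ×ˢ ({0} : Set R₂)) ∩
        ((({0} : Set R₁) ×ˢ (Set.univ : Set R₂)) + I) ⊆ I)
    (h₂ : (((Set.univ : Set R₁) ×ˢ ({0} : Set R₂)) + I) ∩
        (({0} : Set R₁) ×ˢ (Set.univ : Set R₂)) ⊆ I) :
    (∀ a : R₁, ∀ b : R₂, (a, b) ∈ I → (a, (0 : R₂)) ∈ I ∧ ((0 : R₁), b) ∈ I) ∧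
      (∃ I₁ : Set R₁, ∃ I₂ : Set R₂,
        IsSemiringIdeal I₁ ∧ IsSemiringIdeal I₂ ∧ I = I₁ ×ˢ I₂) := by
  obtain ⟨hz, hadd, hmul⟩ := hI
  have key : ∀ a : R₁, ∀ b : R₂, (a, b) ∈ I → (a, (0 : R₂)) ∈ I ∧ ((0 : R₁), b) ∈ I := by
    intro a b hab
    constructor
    · apply h₁
      refine ⟨⟨trivial, rfl⟩, ?_⟩
      have : ((a, (0:R₂)) : R₁ × R₂) = ((0:R₁), -b) + (a, b) := by simp
      rw [this]
      exact Set.add_mem_add ⟨rfl, trivial⟩ hab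
    · apply h₂
      refine ⟨?_, ⟨rfl, trivial⟩⟩
      have : (((0:R₁), b) : R₁ × R₂) = ((-a : R₁), (0:R₂)) + (a, b) := by simp
      rw [this]
      exact Set.add_mem_add ⟨trivial, rfl⟩ hab
  refine ⟨key, {a | (a, (0:R₂)) ∈ I}, {b | ((0:R₁), b) ∈ I}, ?_, ?_, ?_⟩
  · refine ⟨hz, fun x y hx hy => ?_, fun x s hx => ?_⟩
    · have := hadd _ _ hx hy; simpa using this
    · have := hmul (x, (0:R₂)) (s, (0:R₂)) hx; simpa using this
  · refine ⟨hz, fun x y hx hy => ?_, fun x s hx => ?_⟩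
    · have := hadd _ _ hx hy; simpa using this
    · have := hmul ((0:R₁), x) ((0:R₁), s) hx; simpa using this
  · ext ⟨a, b⟩
    constructor
    · intro h; exact (key a b h)
    · rintro ⟨ha, hb⟩
      have := hadd _ _ ha hb
      simpa using this
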